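/- Let n ≥ 1 and let G be a symmetric real n×n matrix with zero diagonal. The public-good provision game with parameters (G, q) has exactly one Nash equilibrium for every q ∈ ℝⁿ if and only if every eigenvalue of G is strictly greater than −1 (equivalently, if and only if I + G is positive definite). -/

import Mathlib

open Matrix Finset

/-- Nash equilibrium of the public-good provision game with parameters `(G, q)`. -/
def NashEq {n : ℕ} (G : Matrix (Fin n) (Fin n) ℝ) (q x : Fin n → ℝ) : Prop :=
  ∀ i, x i = max 0 (q i - ∑ j ∈ Finset.univ.erase i, G i j * x j)

/-- `μ ∈ ℝ` is a (real) eigenvalue of the real matrix `G`. -/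
def HasRealEigenvalue {n : ℕ} (G : Matrix (Fin n) (Fin n) ℝ) (μ : ℝ) : Prop :=
  ∃ v : Fin n → ℝ, v ≠ 0 ∧ G.mulVec v = μ • v

lemma mulVec_apply' {n : ℕ} (G : Matrix (Fin n) (Fin n) ℝ) (x : Fin n → ℝ) (i : Fin n) :
    (G *ᵥ x) i = ∑ j, G i j * x j := rfl

lemma nashEq_iff {n : ℕ} (G : Matrix (Fin n) (Fin n) ℝ) (hdiag : ∀ i, G i i = 0)
    (q x : Fin n → ℝ) :
    NashEq G q x ↔ ∀ i, x i = max 0 (q i - (G *ᵥ x) i) := by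
  unfold NashEq
  apply forall_congr'
  intro i
  have h : ∑ j ∈ Finset.univ.erase i, G i j * x j = (G *ᵥ x) i := by
    rw [mulVec_apply', ← Finset.sum_erase_add Finset.univ (fun j => G i j * x j) (Finset.mem_univ i),
      hdiag i, zero_mul, add_zero]
  rw [h]

lemma lcp_facts {s c : ℝ} (h : s = max 0 c) :
    0 ≤ s ∧ c ≤ s ∧ s * (s - c) = 0 := by
  refine ⟨h ▸ le_max_left 0 c, h ▸ le_max_right 0 c, ?_⟩
  rcases max_choice 0 c with h' | h' <;> rw [h'] at h <;> simp [h]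

lemma nash_unique {n : ℕ} (G : Matrix (Fin n) (Fin n) ℝ) (hdiag : ∀ i, G i i = 0)
    (hpd : (1 + G).PosDef) (q x y : Fin n → ℝ)
    (hx : NashEq G q x) (hy : NashEq G q y) : x = y := by
  by_contra hne
  have hd : x - y ≠ 0 := sub_ne_zero.mpr hne
  have hpos := hpd.dotProduct_mulVec_pos hd
  have hstar : star (x - y) = x - y := by simp
  rw [hstar] at hpos
  have fx := fun i => lcp_facts (((nashEq_iff G hdiag q x).mp hx) i)
  have fy := fun i => lcp_facts (((nashEq_iff G hdiag q y).mp hy) i)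
  have hT : (x - y) ⬝ᵥ ((1 + G) *ᵥ (x - y)) =
      ∑ i, (x i - y i) * ((x i + (G *ᵥ x) i - q i) - (y i + (G *ᵥ y) i - q i)) := by
    rw [Matrix.add_mulVec, Matrix.one_mulVec, Matrix.mulVec_sub, dotProduct]
    apply Finset.sum_congr rfl
    intro i _
    simp only [Pi.add_apply, Pi.sub_apply]
    ring
  have hle : (x - y) ⬝ᵥ ((1 + G) *ᵥ (x - y)) ≤ 0 := by
    rw [hT]
    apply Finset.sum_nonpos
    intro i _
    obtain ⟨hx0, hx1, hx2⟩ := fx i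
    obtain ⟨hy0, hy1, hy2⟩ := fy i
    nlinarith [mul_nonneg hx0 (by linarith : (0:ℝ) ≤ y i + (G *ᵥ y) i - q i),
      mul_nonneg hy0 (by linarith : (0:ℝ) ≤ x i + (G *ᵥ x) i - q i)]
  linarith

lemma rayleigh_lb {n : ℕ} (A : Matrix (Fin n) (Fin n) ℝ) (hA : A.IsHermitian) (c : ℝ)
    (hc : ∀ i, c ≤ hA.eigenvalues i) (x : Fin n → ℝ) :
    c * (x ⬝ᵥ x) ≤ x ⬝ᵥ A *ᵥ x := by
  classical
  set V : Matrix (Fin n) (Fin n) ℝ := (hA.eigenvectorUnitary : Matrix (Fin n) (Fin n) ℝ) with hV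
  set y : Fin n → ℝ := star V *ᵥ x with hy
  have hstarV : star V = Vᵀ := by
    rw [Matrix.star_eq_conjTranspose, Matrix.conjTranspose_eq_transpose_of_trivial]
  have hVy : V *ᵥ y = x := by
    rw [hy, Matrix.mulVec_mulVec, Matrix.mem_unitaryGroup_iff.mp hA.eigenvectorUnitary.2,
      Matrix.one_mulVec]
  have hxy : x ⬝ᵥ x = y ⬝ᵥ y := by
    conv_lhs => rw [← hVy]
    rw [Matrix.dotProduct_mulVec, ← Matrix.mulVec_transpose, ← hstarV, hVy, ← hy]
  have hquad : x ⬝ᵥ A *ᵥ x = ∑ i, hA.eigenvalues i * (y i)^2 := by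
    conv_lhs => rw [hA.spectral_theorem]
    rw [RCLike.ofReal_real_eq_id]
    simp only [Function.id_comp]
    conv_lhs => rw [Unitary.conjStarAlgAut_apply, ← Matrix.mulVec_mulVec, ← Matrix.mulVec_mulVec, ← hy,
      Matrix.dotProduct_mulVec, ← Matrix.mulVec_transpose]
    rw [show Vᵀ *ᵥ x = y by rw [← hstarV, hy]]
    simp [dotProduct, Matrix.mulVec_diagonal]
    ring_nf
    apply Finset.sum_congr rfl
    intro i _
    ring
  rw [hquad, hxy, dotProduct, Finset.mul_sum]
  apply Finset.sum_le_sum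
  intro i _
  have : (0:ℝ) ≤ (y i)^2 := sq_nonneg _
  nlinarith [hc i]

lemma nash_exists {n : ℕ} (hn : 1 ≤ n) (G : Matrix (Fin n) (Fin n) ℝ)
    (hdiag : ∀ i, G i i = 0) (hsymm : G.IsSymm) (hpd : (1 + G).PosDef) (q : Fin n → ℝ) :
    ∃ x, NashEq G q x := by
  classical
  set A : Matrix (Fin n) (Fin n) ℝ := 1 + G with hAdef
  have hA : A.IsHermitian := hpd.1
  have hAsymm : A.IsSymm := Matrix.isSymm_one.add hsymm
  have hAii : ∀ i, A i i = 1 := by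
    intro i
    simp [hAdef, Matrix.add_apply, Matrix.one_apply_eq, hdiag i]
  have hAmul : ∀ z : Fin n → ℝ, A *ᵥ z = z + G *ᵥ z := by
    intro z
    rw [hAdef, Matrix.add_mulVec, Matrix.one_mulVec]
  -- the potential function
  set f : (Fin n → ℝ) → ℝ := fun x => (x ⬝ᵥ A *ᵥ x) / 2 - q ⬝ᵥ x with hf
  have hf0 : f 0 = 0 := by simp [hf]
  have hfc : Continuous f := by
    apply Continuous.sub
    · apply Continuous.div_const
      have : (fun x : Fin n → ℝ => x ⬝ᵥ A *ᵥ x)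
          = fun x : Fin n → ℝ => ∑ i, x i * ∑ j, A i j * x j := rfl
      rw [this]
      exact continuous_finset_sum _ fun i _ =>
        (continuous_apply i).mul
          (continuous_finset_sum _ fun j _ => continuous_const.mul (continuous_apply j))
    · exact continuous_finset_sum _ fun i _ => continuous_const.mul (continuous_apply i)
  -- coercivity constants
  obtain ⟨c, hcpos, hray⟩ : ∃ c : ℝ, 0 < c ∧ ∀ x : Fin n → ℝ, c * (x ⬝ᵥ x) ≤ x ⬝ᵥ A *ᵥ x := by
    have hne : (Finset.univ : Finset (Fin n)).Nonempty := ⟨⟨0, hn⟩, Finset.mem_univ _⟩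
    refine ⟨Finset.univ.inf' hne hA.eigenvalues, ?_, ?_⟩
    · obtain ⟨i0, _, h0⟩ := Finset.exists_mem_eq_inf' hne hA.eigenvalues
      rw [h0]
      exact hpd.eigenvalues_pos i0
    · exact rayleigh_lb A hA _ (fun i => Finset.inf'_le _ (Finset.mem_univ i))
  obtain ⟨K0, hK0nn, hlbq⟩ : ∃ K0 : ℝ, 0 ≤ K0 ∧
      ∀ x : Fin n → ℝ, q ⬝ᵥ x ≤ c / 4 * (x ⬝ᵥ x) + K0 := by
    refine ⟨(∑ i, (q i)^2) / c, div_nonneg (Finset.sum_nonneg fun i _ => sq_nonneg _) hcpos.le,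
      fun x => ?_⟩
    rw [dotProduct, dotProduct, Finset.mul_sum, Finset.sum_div,
      ← Finset.sum_add_distrib]
    apply Finset.sum_le_sum
    intro i _
    have key : 0 ≤ (c / 2 * x i - q i)^2 / c := div_nonneg (sq_nonneg _) hcpos.le
    have expand : (c / 2 * x i - q i)^2 / c
        = c / 4 * (x i * x i) - q i * x i + (q i)^2 / c := by
      field_simp
      ring
    linarith [expand ▸ key]
  have hlb : ∀ x : Fin n → ℝ, c / 4 * (x ⬝ᵥ x) - K0 ≤ f x := by
    intro x
    have h1 := hlbq x
    have h2 := hray x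
    rw [hf]
    dsimp only
    linarith
  -- compact box minimization
  obtain ⟨R, hRpos, hR2⟩ : ∃ R : ℝ, 0 < R ∧ 4 * K0 < R ^ 2 * c := by
    refine ⟨Real.sqrt (4 * K0 / c) + 1, by positivity, ?_⟩
    have hs : Real.sqrt (4 * K0 / c) ^ 2 = 4 * K0 / c :=
      Real.sq_sqrt (by positivity)
    have hsnn := Real.sqrt_nonneg (4 * K0 / c)
    rw [← div_lt_iff₀ hcpos]
    nlinarith
  set Kset : Set (Fin n → ℝ) := Set.pi Set.univ (fun _ => Set.Icc (0:ℝ) R) with hKset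
  have hKcomp : IsCompact Kset := isCompact_univ_pi fun _ => isCompact_Icc
  have h0K : (0 : Fin n → ℝ) ∈ Kset := by
    intro i _
    exact ⟨le_refl _, hRpos.le⟩
  obtain ⟨x₀, hx₀K, hx₀min⟩ := hKcomp.exists_isMinOn ⟨0, h0K⟩ hfc.continuousOn
  have hx₀nn : ∀ i, 0 ≤ x₀ i := fun i => (hx₀K i (Set.mem_univ i)).1
  have hx₀0 : f x₀ ≤ 0 := hf0 ▸ hx₀min h0K
  -- global minimality on the nonnegative orthant
  have hglob : ∀ x : Fin n → ℝ, (∀ i, 0 ≤ x i) → f x₀ ≤ f x := by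
    intro x hx
    by_cases hcase : ∀ i, x i ≤ R
    · exact hx₀min fun i _ => ⟨hx i, hcase i⟩
    · push_neg at hcase
      obtain ⟨j, hj⟩ := hcase
      have hS : R ^ 2 < x ⬝ᵥ x := by
        have h1 : x j * x j ≤ x ⬝ᵥ x := by
          rw [dotProduct]
          exact Finset.single_le_sum (fun i _ => mul_nonneg (hx i) (hx i)) (Finset.mem_univ j)
        nlinarith [hx j]
      have hfxpos : 0 < f x := by
        have h4 := hlb x
        clear_value f
        nlinarith [mul_pos hcpos (sub_pos.mpr hS)]
      linarith
  -- per-coordinate first-order conditions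
  refine ⟨x₀, (nashEq_iff G hdiag q x₀).mpr fun i => ?_⟩
  have hexp : ∀ d : ℝ, f (x₀ + d • (Pi.single i 1 : Fin n → ℝ))
      = f x₀ + d * ((A *ᵥ x₀) i - q i) + d ^ 2 / 2 := by
    intro d
    have hu : A *ᵥ (Pi.single i 1 : Fin n → ℝ) = fun j => A j i := by
      rw [Matrix.mulVec_single]
      funext j; simp
    have hxAu : x₀ ⬝ᵥ (A *ᵥ (Pi.single i 1 : Fin n → ℝ)) = (A *ᵥ x₀) i := by
      rw [hu, dotProduct, mulVec_apply']
      apply Finset.sum_congr rfl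
      intro j _
      rw [hAsymm.apply i j]
      ring
    have huAx : (Pi.single i 1 : Fin n → ℝ) ⬝ᵥ (A *ᵥ x₀) = (A *ᵥ x₀) i := by
      rw [single_dotProduct, one_mul]
    have huAu : (Pi.single i 1 : Fin n → ℝ) ⬝ᵥ (A *ᵥ (Pi.single i 1 : Fin n → ℝ)) = 1 := by
      rw [single_dotProduct, one_mul, hu]
      exact hAii i
    have hqu : q ⬝ᵥ (Pi.single i 1 : Fin n → ℝ) = q i := by
      rw [dotProduct_single, mul_one]
    rw [hf]
    dsimp only
    simp only [Matrix.mulVec_add, Matrix.mulVec_smul, dotProduct_add,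
      add_dotProduct, smul_dotProduct, dotProduct_smul,
      hxAu, huAx, huAu, hqu, smul_eq_mul]
    ring
  clear_value f
  have hkey : ∀ t : ℝ, 0 ≤ t →
      0 ≤ (t - x₀ i) * ((A *ᵥ x₀) i - q i) + (t - x₀ i) ^ 2 / 2 := by
    intro t ht
    have hmem : ∀ j, 0 ≤ (x₀ + (t - x₀ i) • (Pi.single i 1 : Fin n → ℝ)) j := by
      intro j
      by_cases hj : j = i
      · subst hj
        simp only [Pi.add_apply, Pi.smul_apply, Pi.single_eq_same, smul_eq_mul, mul_one]
        linarith
      · simp only [Pi.add_apply, Pi.smul_apply, Pi.single_eq_of_ne hj, smul_eq_mul, mul_zero,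
          add_zero]
        exact hx₀nn j
    have h5 := hglob _ hmem
    rw [hexp] at h5
    linarith
  have hccnn : 0 ≤ (A *ᵥ x₀) i - q i := by
    by_contra h
    push_neg at h
    have h1 := hkey (x₀ i - ((A *ᵥ x₀) i - q i)) (by linarith [hx₀nn i])
    nlinarith
  have hscc : x₀ i * ((A *ᵥ x₀) i - q i) = 0 := by
    rcases eq_or_lt_of_le (hx₀nn i) with h0 | h0
    · rw [← h0, zero_mul]
    · rcases eq_or_lt_of_le hccnn with h1 | h1
      · rw [← h1, mul_zero]
      · exfalso
        have hm : 0 < min (x₀ i) ((A *ᵥ x₀) i - q i) := lt_min h0 h1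
        have h2 := hkey (x₀ i - min (x₀ i) ((A *ᵥ x₀) i - q i))
          (by linarith [min_le_left (x₀ i) ((A *ᵥ x₀) i - q i)])
        have h3 := min_le_right (x₀ i) ((A *ᵥ x₀) i - q i)
        nlinarith
  have hACG : (A *ᵥ x₀) i = x₀ i + (G *ᵥ x₀) i := by
    rw [hAmul x₀]; rfl
  have hqG : q i - (G *ᵥ x₀) i = x₀ i - ((A *ᵥ x₀) i - q i) := by
    rw [hACG]; ring
  rw [hqG]
  rcases eq_or_lt_of_le (hx₀nn i) with h0 | h0
  · rw [← h0, zero_sub]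
    exact (max_eq_left (by linarith)).symm
  · have h1 : (A *ᵥ x₀) i - q i = 0 := by
      rcases mul_eq_zero.mp hscc with h | h
      · exfalso; linarith
      · exact h
    rw [h1, sub_zero]
    exact (max_eq_right (hx₀nn i)).symm

lemma two_nash_of_bad_eig {n : ℕ} (G : Matrix (Fin n) (Fin n) ℝ) (hdiag : ∀ i, G i i = 0)
    (μ : ℝ) (hμ : μ ≤ -1) (v : Fin n → ℝ) (hv : v ≠ 0) (hev : G *ᵥ v = μ • v) :
    ∃ q x y : Fin n → ℝ, NashEq G q x ∧ NashEq G q y ∧ x ≠ y := by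
  set A : Matrix (Fin n) (Fin n) ℝ := 1 + G with hAdef
  set vp : Fin n → ℝ := fun i => max 0 (v i) with hvp
  set vm : Fin n → ℝ := fun i => max 0 (-v i) with hvm
  have hsub : ∀ i, vp i - vm i = v i := by
    intro i
    rcases le_or_gt 0 (v i) with h | h
    · rw [hvp, hvm]
      dsimp only
      rw [max_eq_right h, max_eq_left (by linarith), sub_zero]
    · rw [hvp, hvm]
      dsimp only
      rw [max_eq_left h.le, max_eq_right (by linarith)]
      ring
  have hvpm : vp - vm = v := funext fun i => hsub i
  have hAmul : ∀ z : Fin n → ℝ, A *ᵥ z = z + G *ᵥ z := by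
    intro z
    rw [hAdef, Matrix.add_mulVec, Matrix.one_mulVec]
  have hAv : ∀ i, (A *ᵥ vp) i - (A *ᵥ vm) i = (1 + μ) * v i := by
    intro i
    have h1 : A *ᵥ vp - A *ᵥ vm = A *ᵥ v := by
      rw [← Matrix.mulVec_sub, hvpm]
    have h2 : (A *ᵥ v) i = (1 + μ) * v i := by
      rw [hAmul, Pi.add_apply, hev, Pi.smul_apply, smul_eq_mul]
      ring
    have := congrFun h1 i
    rw [Pi.sub_apply] at this
    rw [this, h2]
  set q : Fin n → ℝ := fun i => min ((A *ᵥ vp) i) ((A *ᵥ vm) i) with hq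
  have hGA : ∀ (z : Fin n → ℝ) i, (G *ᵥ z) i = (A *ᵥ z) i - z i := by
    intro z i
    rw [hAmul, Pi.add_apply]
    ring
  have h1μ : 1 + μ ≤ 0 := by linarith
  refine ⟨q, vp, vm, ?_, ?_, ?_⟩
  · rw [nashEq_iff G hdiag]
    intro i
    rw [hGA vp i, hq]
    dsimp only
    rcases lt_or_ge 0 (v i) with h | h
    · have hab : (A *ᵥ vp) i ≤ (A *ᵥ vm) i := by nlinarith [hAv i]
      rw [min_eq_left hab, hvp]
      dsimp only
      rw [max_eq_right h.le]
      rw [show (A *ᵥ vp) i - ((A *ᵥ vp) i - v i) = v i by ring, max_eq_right h.le]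
    · have hvpi : vp i = 0 := by rw [hvp]; dsimp only; rw [max_eq_left h]
      rw [hvpi]
      have : min ((A *ᵥ vp) i) ((A *ᵥ vm) i) - ((A *ᵥ vp) i - 0) ≤ 0 := by
        have := min_le_left ((A *ᵥ vp) i) ((A *ᵥ vm) i)
        linarith
      rw [max_eq_left this]
  · rw [nashEq_iff G hdiag]
    intro i
    rw [hGA vm i, hq]
    dsimp only
    rcases lt_or_ge (v i) 0 with h | h
    · have hab : (A *ᵥ vm) i ≤ (A *ᵥ vp) i := by nlinarith [hAv i]
      rw [min_eq_right hab, hvm]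
      dsimp only
      rw [max_eq_right (by linarith : (0:ℝ) ≤ -v i)]
      rw [show (A *ᵥ vm) i - ((A *ᵥ vm) i - -v i) = -v i by ring,
        max_eq_right (by linarith : (0:ℝ) ≤ -v i)]
    · have hvmi : vm i = 0 := by rw [hvm]; dsimp only; rw [max_eq_left (by linarith)]
      rw [hvmi]
      have : min ((A *ᵥ vp) i) ((A *ᵥ vm) i) - ((A *ᵥ vm) i - 0) ≤ 0 := by
        have := min_le_right ((A *ᵥ vp) i) ((A *ᵥ vm) i)
        linarith
      rw [max_eq_left this]
  · intro hcon
    apply hv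
    funext i
    have := hsub i
    rw [hcon] at this
    simpa using this.symm

lemma posdef_of_eig {n : ℕ} (hn : 1 ≤ n) (G : Matrix (Fin n) (Fin n) ℝ)
    (hsymm : G.IsSymm) (heig : ∀ μ : ℝ, HasRealEigenvalue G μ → -1 < μ) :
    (1 + G).PosDef := by
  classical
  have hGh : G.IsHermitian := by
    rw [Matrix.IsHermitian, Matrix.conjTranspose_eq_transpose_of_trivial]
    exact hsymm
  have hA : (1 + G).IsHermitian := Matrix.isHermitian_one.add hGh
  have heval : ∀ i, 0 < hA.eigenvalues i := by
    intro i
    have hv := hA.mulVec_eigenvectorBasis i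
    have hvne : (⇑(hA.eigenvectorBasis i) : Fin n → ℝ) ≠ 0 := by
      have h0 : hA.eigenvectorBasis i ≠ 0 := hA.eigenvectorBasis.orthonormal.ne_zero i
      intro h
      apply h0
      ext j
      exact congrFun h j
    have hG : G *ᵥ (⇑(hA.eigenvectorBasis i) : Fin n → ℝ)
        = (hA.eigenvalues i - 1) • (⇑(hA.eigenvectorBasis i) : Fin n → ℝ) := by
      rw [Matrix.add_mulVec, Matrix.one_mulVec] at hv
      funext j
      have := congrFun hv j
      simp only [Pi.add_apply, Pi.smul_apply, smul_eq_mul] at this ⊢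
      linarith
    have := heig _ ⟨_, hvne, hG⟩
    linarith
  refine Matrix.PosDef.of_dotProduct_mulVec_pos hA (fun x hx => ?_)
  have hstar : star x = x := by simp
  rw [hstar]
  have hne : (Finset.univ : Finset (Fin n)).Nonempty := ⟨⟨0, hn⟩, Finset.mem_univ _⟩
  set c : ℝ := Finset.univ.inf' hne hA.eigenvalues with hc
  have hcpos : 0 < c := by
    obtain ⟨i0, _, h0⟩ := Finset.exists_mem_eq_inf' hne hA.eigenvalues
    rw [hc, h0]
    exact heval i0
  have hxx : 0 < x ⬝ᵥ x := by
    obtain ⟨j, hj⟩ := Function.ne_iff.mp hx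
    rw [dotProduct]
    exact Finset.sum_pos' (fun i _ => mul_self_nonneg (x i))
      ⟨j, Finset.mem_univ j, mul_self_pos.mpr hj⟩
  calc (0:ℝ) < c * (x ⬝ᵥ x) := mul_pos hcpos hxx
    _ ≤ x ⬝ᵥ (1 + G) *ᵥ x :=
      rayleigh_lb _ hA c (fun i => Finset.inf'_le _ (Finset.mem_univ i)) x


theorem unique_nash_iff_eig_gt_neg_one_symm (n : ℕ) (hn : 1 ≤ n)
    (G : Matrix (Fin n) (Fin n) ℝ) (hdiag : ∀ i, G i i = 0) (hsymm : G.IsSymm) :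
    ((∀ q : Fin n → ℝ, ∃! x : Fin n → ℝ, NashEq G q x) ↔
      (∀ μ : ℝ, HasRealEigenvalue G μ → -1 < μ)) ∧
    ((∀ q : Fin n → ℝ, ∃! x : Fin n → ℝ, NashEq G q x) ↔ (1 + G).PosDef) := by
  have hU_of_PD : (1 + G).PosDef → ∀ q : Fin n → ℝ, ∃! x : Fin n → ℝ, NashEq G q x := by
    intro hpd q
    obtain ⟨x, hx⟩ := nash_exists hn G hdiag hsymm hpd q
    exact ⟨x, hx, fun y hy => nash_unique G hdiag hpd q y x hy hx⟩
  have hEig_of_U : (∀ q : Fin n → ℝ, ∃! x : Fin n → ℝ, NashEq G q x) →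
      ∀ μ : ℝ, HasRealEigenvalue G μ → -1 < μ := by
    rintro hU μ ⟨v, hv, hev⟩
    by_contra h
    push_neg at h
    obtain ⟨q, x, y, hx, hy, hxy⟩ := two_nash_of_bad_eig G hdiag μ h v hv hev
    obtain ⟨z, _, huniq⟩ := hU q
    exact hxy ((huniq x hx).trans (huniq y hy).symm)
  have hPD_of_Eig := posdef_of_eig hn G hsymm
  exact ⟨⟨hEig_of_U, fun h => hU_of_PD (hPD_of_Eig h)⟩,
    ⟨fun hU => hPD_of_Eig (hEig_of_U hU), hU_of_PD⟩⟩
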